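/- arXiv:2311.01569 — 2 statements merged into one kernel-verified Lean document; each statement's English description precedes it below -/
import Mathlib

section
/- For every integer n ≥ 3, the number of bubbles of size 2n-3 among linear chord diagrams on 2n vertices satisfies B_{n,2n-3} = 2·((2n-3)·d_{n-2,0} + d_{n-2,1}). -/
open Finset

/-- A linear chord diagram on `2*n` vertices: a fixed-point-free involution of `Fin (2*n)`.
Vertex `v ∈ {1,...,2n}` is represented by the index `v-1 : Fin (2*n)`. -/
def IsLCD (n : ℕ) (f : Fin (2*n) → Fin (2*n)) : Prop :=
  ∀ i, f (f i) = i ∧ f i ≠ i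

/-- The chord `{i, i+1}` (1-based vertices) is a short chord of `f`. -/
def IsShort (n : ℕ) (f : Fin (2*n) → Fin (2*n)) (i : ℕ) : Prop :=
  ∃ (_h1 : 1 ≤ i) (h2 : i < 2*n), f ⟨i-1, by omega⟩ = ⟨i, h2⟩

/-- The interval `[a,b] ⊆ {1,...,2n}` (1-based) is a bubble of the diagram `f`:
it contains no short chord, its left end is the start of the diagram or is preceded
by the short chord `{a-2,a-1}`, and its right end is the end of the diagram or is
followed by the short chord `{b+1,b+2}`. -/
def IsBubble (n : ℕ) (f : Fin (2*n) → Fin (2*n)) (a b : ℕ) : Prop :=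
  1 ≤ a ∧ a ≤ b ∧ b ≤ 2*n ∧
  (∀ i, a ≤ i → i + 1 ≤ b → ¬ IsShort n f i) ∧
  (a = 1 ∨ IsShort n f (a-2)) ∧
  (b = 2*n ∨ IsShort n f (b+1))

open scoped Classical in
/-- `B n p` : the number of pairs `(D, [a,b])` where `D` is a linear chord diagram on
`2n` vertices and `[a,b]` is a bubble of `D` of size `p = b - a + 1`. -/
noncomputable def B (n p : ℕ) : ℕ :=
  ((univ ×ˢ (Finset.Icc 1 (2*n) ×ˢ Finset.Icc 1 (2*n))).filter
    (fun x : (Fin (2*n) → Fin (2*n)) × ℕ × ℕ =>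
      IsLCD n x.1 ∧ IsBubble n x.1 x.2.1 x.2.2 ∧ x.2.2 - x.2.1 + 1 = p)).card

open scoped Classical in
/-- `d n s` : the number of linear chord diagrams on `2n` vertices having exactly `s`
short chords. -/
noncomputable def d (n s : ℕ) : ℕ :=
  (univ.filter (fun f : Fin (2*n) → Fin (2*n) =>
    IsLCD n f ∧ ((Finset.Icc 1 (2*n-1)).filter (fun i => IsShort n f i)).card = s)).card

open scoped Classical in
/-- `pathMatch m j` : the number of `j`-edge matchings of the path graph on `m` vertices
`{1,...,m}` with edges `{i,i+1}`, `1 ≤ i ≤ m-1`.  An edge is encoded by its left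
endpoint; a set of edges is a matching iff no two left endpoints are consecutive. -/
noncomputable def pathMatch (m j : ℕ) : ℕ :=
  (((Finset.Icc 1 (m-1)).powerset).filter
    (fun S => S.card = j ∧ ∀ i ∈ S, i + 1 ∉ S)).card

/-- The double factorial `(2m-1)!! = (2m)! / (2^m * m!)`, so `(-1)!! = 1`. -/
def doubleFact (m : ℕ) : ℕ := (2*m).factorial / (2^m * m.factorial)




section Aux
variable {n : ℕ}

lemma isShort_iff {f : Fin (2*n) → Fin (2*n)} {i : ℕ} (h1 : 1 ≤ i) (h2 : i < 2*n) :
    IsShort n f i ↔ ((f ⟨i-1, by omega⟩ : Fin (2*n)) : ℕ) = i := by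
  constructor
  · rintro ⟨ha, h2', h⟩
    rw [h]
  · intro h
    exact ⟨h1, h2, Fin.ext h⟩

lemma isShort_bounds {f : Fin (2*n) → Fin (2*n)} {i : ℕ} (h : IsShort n f i) :
    1 ≤ i ∧ i < 2*n := by
  obtain ⟨h1, h2, -⟩ := h
  exact ⟨h1, h2⟩

lemma lcd_eq_iff {f : Fin (2*n) → Fin (2*n)} (hf : IsLCD n f) {x y : Fin (2*n)} :
    f x = y ↔ f y = x := by
  constructor
  · rintro rfl; exact (hf x).1
  · rintro rfl; exact (hf y).1

def lft (w j : ℕ) : ℕ := if j + 3 < w then j + 3 else j + 4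
def drp (w m : ℕ) : ℕ := if m < w then m - 3 else m - 4

lemma lft_lt {n w j : ℕ} (hn : 3 ≤ n) (hw2 : w ≤ 2*n-1) (hj : j < 2*(n-2)) :
    lft w j < 2*n := by
  unfold lft; split_ifs <;> omega

lemma drp_lt {n w m : ℕ} (hn : 3 ≤ n) (hw : 3 ≤ w) (hw2 : w ≤ 2*n-1) (hm : m < 2*n) :
    drp w m < 2*(n-2) := by
  unfold drp; split_ifs <;> omega

lemma lft_ge {w j : ℕ} : 3 ≤ lft w j := by unfold lft; split_ifs <;> omega

lemma lft_ne {w j : ℕ} : lft w j ≠ w := by unfold lft; split_ifs <;> omega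

lemma drp_lft {w j : ℕ} : drp w (lft w j) = j := by
  unfold lft drp; split_ifs <;> omega

lemma lft_drp {w m : ℕ} (hw : 3 ≤ w) (hm : 3 ≤ m) (hne : m ≠ w) :
    lft w (drp w m) = m := by
  unfold lft drp; split_ifs <;> omega

end Aux

def Phi (n w : ℕ) (hn : 3 ≤ n) (hw : 3 ≤ w) (hw2 : w ≤ 2*n-1)
    (f : Fin (2*n) → Fin (2*n)) (k : Fin (2*(n-2))) : Fin (2*(n-2)) :=
  ⟨drp w ((f ⟨lft w k, lft_lt hn hw2 k.2⟩ : Fin (2*n)) : ℕ),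
    drp_lt hn hw hw2 (f ⟨lft w k, lft_lt hn hw2 k.2⟩).isLt⟩

def Psi (n w : ℕ) (hn : 3 ≤ n) (hw : 3 ≤ w) (hw2 : w ≤ 2*n-1)
    (g : Fin (2*(n-2)) → Fin (2*(n-2))) (m : Fin (2*n)) : Fin (2*n) :=
  if (m:ℕ) = 0 then ⟨w, by omega⟩
  else if (m:ℕ) = w then ⟨0, by omega⟩
  else if (m:ℕ) = 1 then ⟨2, by omega⟩
  else if (m:ℕ) = 2 then ⟨1, by omega⟩
  else ⟨lft w ((g ⟨drp w m, drp_lt hn hw hw2 m.isLt⟩ : Fin (2*(n-2))) : ℕ),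
    lft_lt hn hw2 (g ⟨drp w m, drp_lt hn hw hw2 m.isLt⟩).isLt⟩

section Bij
variable {n w : ℕ} (hn : 3 ≤ n) (hw : 3 ≤ w) (hw2 : w ≤ 2*n-1)

/-- range fact for `f` in the source set -/
lemma range_fact {f : Fin (2*n) → Fin (2*n)} (hf : IsLCD n f)
    (e0 : f ⟨0, by omega⟩ = ⟨w, by omega⟩) (e1 : f ⟨1, by omega⟩ = ⟨2, by omega⟩)
    (x : Fin (2*n)) (hx3 : 3 ≤ (x:ℕ)) (hxw : (x:ℕ) ≠ w) :
    3 ≤ ((f x : Fin (2*n)) : ℕ) ∧ ((f x : Fin (2*n)) : ℕ) ≠ w := by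
  have e2 : f ⟨2, by omega⟩ = ⟨1, by omega⟩ := (lcd_eq_iff hf).mp e1
  constructor
  · by_contra hlt
    have hv : ((f x : Fin (2*n)) : ℕ) = 0 ∨ ((f x : Fin (2*n)) : ℕ) = 1 ∨
        ((f x : Fin (2*n)) : ℕ) = 2 := by omega
    rcases hv with hv | hv | hv
    · have : f x = ⟨0, by omega⟩ := Fin.ext hv
      have := (lcd_eq_iff hf).mp this
      rw [e0] at this
      have hx : (w:ℕ) = (x:ℕ) := congrArg Fin.val this
      omega
    · have : f x = ⟨1, by omega⟩ := Fin.ext hv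
      have := (lcd_eq_iff hf).mp this
      rw [e1] at this
      have hx : (2:ℕ) = (x:ℕ) := congrArg Fin.val this
      omega
    · have : f x = ⟨2, by omega⟩ := Fin.ext hv
      have := (lcd_eq_iff hf).mp this
      rw [e2] at this
      have hx : (1:ℕ) = (x:ℕ) := congrArg Fin.val this
      omega
  · intro hv
    have hww : f ⟨w, by omega⟩ = ⟨0, by omega⟩ := (lcd_eq_iff hf).mp e0
    have hfx : f x = ⟨w, by omega⟩ := Fin.ext hv
    have h2 : f ⟨w, by omega⟩ = x := (lcd_eq_iff hf).mp hfx
    have h3 : ((0:ℕ)) = (x:ℕ) := congrArg Fin.val (hww.symm.trans h2)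
    omega

end Bij

lemma Psi_val {n w : ℕ} (hn : 3 ≤ n) (hw : 3 ≤ w) (hw2 : w ≤ 2*n-1)
    (g : Fin (2*(n-2)) → Fin (2*(n-2))) (m : Fin (2*n)) :
    ((Psi n w hn hw hw2 g m : Fin (2*n)) : ℕ) =
      if (m:ℕ) = 0 then w else if (m:ℕ) = w then 0 else if (m:ℕ) = 1 then 2
      else if (m:ℕ) = 2 then 1
      else lft w ((g ⟨drp w m, drp_lt hn hw hw2 m.isLt⟩ : Fin (2*(n-2))) : ℕ) := by
  unfold Psi
  split_ifs <;> rfl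

lemma Psi_val_else {n w : ℕ} (hn : 3 ≤ n) (hw : 3 ≤ w) (hw2 : w ≤ 2*n-1)
    (g : Fin (2*(n-2)) → Fin (2*(n-2))) (m : Fin (2*n)) (h3 : 3 ≤ (m:ℕ)) (hne : (m:ℕ) ≠ w) :
    ((Psi n w hn hw hw2 g m : Fin (2*n)) : ℕ) =
      lft w ((g ⟨drp w m, drp_lt hn hw hw2 m.isLt⟩ : Fin (2*(n-2))) : ℕ) := by
  rw [Psi_val hn hw hw2]
  rw [if_neg (by omega), if_neg (by omega), if_neg (by omega), if_neg (by omega)]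
lemma Phi_mem {n w : ℕ} (hn : 3 ≤ n) (hw : 3 ≤ w) (hw2 : w ≤ 2*n-1)
    (f : Fin (2*n) → Fin (2*n)) (hf : IsLCD n f)
    (e0 : f ⟨0, by omega⟩ = ⟨w, by omega⟩) (e1 : f ⟨1, by omega⟩ = ⟨2, by omega⟩)
    (hns : ∀ i, 4 ≤ i → i + 1 ≤ 2*n → ¬ IsShort n f i) :
    IsLCD (n-2) (Phi n w hn hw hw2 f) ∧
      ∀ i, IsShort (n-2) (Phi n w hn hw hw2 f) i → i + 3 = w := by
  constructor
  · intro k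
    have hx3 : (3:ℕ) ≤ lft w (k:ℕ) := lft_ge
    have hxw : lft w (k:ℕ) ≠ w := lft_ne
    have hr := range_fact hn hw2 hf e0 e1 ⟨lft w (k:ℕ), lft_lt hn hw2 k.isLt⟩ hx3 hxw
    have harg : (⟨lft w ((Phi n w hn hw hw2 f k : Fin (2*(n-2))) : ℕ),
        lft_lt hn hw2 (Phi n w hn hw hw2 f k).isLt⟩ : Fin (2*n)) =
        f ⟨lft w (k:ℕ), lft_lt hn hw2 k.isLt⟩ := by
      apply Fin.ext
      show lft w (drp w ((f ⟨lft w (k:ℕ), lft_lt hn hw2 k.isLt⟩ : Fin (2*n)) : ℕ))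
        = ((f ⟨lft w (k:ℕ), lft_lt hn hw2 k.isLt⟩ : Fin (2*n)) : ℕ)
      exact lft_drp hw hr.1 hr.2
    constructor
    · apply Fin.ext
      show drp w ((f (⟨lft w ((Phi n w hn hw hw2 f k : Fin (2*(n-2))) : ℕ),
        lft_lt hn hw2 (Phi n w hn hw hw2 f k).isLt⟩ : Fin (2*n)) : Fin (2*n)) : ℕ) = (k:ℕ)
      rw [harg, (hf _).1]
      show drp w (lft w (k:ℕ)) = (k:ℕ)
      exact drp_lft
    · intro heq
      have hv : drp w ((f ⟨lft w (k:ℕ), lft_lt hn hw2 k.isLt⟩ : Fin (2*n)) : ℕ) = (k:ℕ) :=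
        congrArg Fin.val heq
      have hv2 : ((f ⟨lft w (k:ℕ), lft_lt hn hw2 k.isLt⟩ : Fin (2*n)) : ℕ) = lft w (k:ℕ) := by
        rw [← lft_drp hw hr.1 hr.2, hv]
      have : f ⟨lft w (k:ℕ), lft_lt hn hw2 k.isLt⟩ = ⟨lft w (k:ℕ), lft_lt hn hw2 k.isLt⟩ :=
        Fin.ext hv2
      exact (hf _).2 this
  · intro i hi
    obtain ⟨hi1, hi2, he⟩ := hi
    have hx3 : (3:ℕ) ≤ lft w (i-1) := lft_ge
    have hxw : lft w (i-1) ≠ w := lft_ne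
    have hlt : lft w (i-1) < 2*n := lft_lt hn hw2 (by omega)
    have hr := range_fact hn hw2 hf e0 e1 ⟨lft w (i-1), hlt⟩ hx3 hxw
    have hv : drp w ((f ⟨lft w (i-1), hlt⟩ : Fin (2*n)) : ℕ) = i := congrArg Fin.val he
    have hfx1 : ((f ⟨lft w (i-1), hlt⟩ : Fin (2*n)) : ℕ) = lft w i := by
      rw [← lft_drp hw hr.1 hr.2, hv]
    clear he hv
    by_cases hca : (i-1) + 3 < w <;> by_cases hcb : i + 3 < w
    · exfalso
      refine hns (i+3) (by omega) (by omega) ⟨by omega, by omega, ?_⟩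
      have hmk : (⟨i+3-1, by omega⟩ : Fin (2*n)) = ⟨lft w (i-1), hlt⟩ := by
        apply Fin.ext
        show i+3-1 = lft w (i-1)
        unfold lft; rw [if_pos hca]; omega
      have h5 : lft w i = i + 3 := by unfold lft; rw [if_pos hcb]
      exact (congrArg f hmk).trans (Fin.ext (hfx1.trans h5))
    · omega
    · omega
    · exfalso
      refine hns (i+4) (by omega) (by omega) ⟨by omega, by omega, ?_⟩
      have hmk : (⟨i+4-1, by omega⟩ : Fin (2*n)) = ⟨lft w (i-1), hlt⟩ := by
        apply Fin.ext
        show i+4-1 = lft w (i-1)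
        unfold lft; rw [if_neg hca]; omega
      have h5 : lft w i = i + 4 := by unfold lft; rw [if_neg hcb]
      exact (congrArg f hmk).trans (Fin.ext (hfx1.trans h5))
lemma Psi_mem {n w : ℕ} (hn : 3 ≤ n) (hw : 3 ≤ w) (hw2 : w ≤ 2*n-1)
    (g : Fin (2*(n-2)) → Fin (2*(n-2))) (hg : IsLCD (n-2) g)
    (hgs : ∀ i, IsShort (n-2) g i → i + 3 = w) :
    IsLCD n (Psi n w hn hw hw2 g) ∧ IsShort n (Psi n w hn hw hw2 g) 2 ∧
      (∀ i, 4 ≤ i → i + 1 ≤ 2*n → ¬ IsShort n (Psi n w hn hw hw2 g) i) ∧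
      ((Psi n w hn hw hw2 g ⟨0, by omega⟩ : Fin (2*n)) : ℕ) = w := by
  have P0 : Psi n w hn hw hw2 g ⟨0, by omega⟩ = ⟨w, by omega⟩ :=
    Fin.ext ((Psi_val hn hw hw2 g ⟨0, by omega⟩).trans (by simp))
  have Pw : Psi n w hn hw hw2 g ⟨w, by omega⟩ = ⟨0, by omega⟩ :=
    Fin.ext ((Psi_val hn hw hw2 g ⟨w, by omega⟩).trans (by simp [show w ≠ 0 by omega]))
  have P1 : Psi n w hn hw hw2 g ⟨1, by omega⟩ = ⟨2, by omega⟩ :=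
    Fin.ext ((Psi_val hn hw hw2 g ⟨1, by omega⟩).trans (by simp [show (1:ℕ) ≠ w by omega]))
  have P2 : Psi n w hn hw hw2 g ⟨2, by omega⟩ = ⟨1, by omega⟩ :=
    Fin.ext ((Psi_val hn hw hw2 g ⟨2, by omega⟩).trans (by simp [show (2:ℕ) ≠ w by omega]))
  have Pelse : ∀ m : Fin (2*n), 3 ≤ (m:ℕ) → (m:ℕ) ≠ w →
      Psi n w hn hw hw2 g m = ⟨lft w ((g ⟨drp w m, drp_lt hn hw hw2 m.isLt⟩ : Fin (2*(n-2))) : ℕ),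
        lft_lt hn hw2 (g ⟨drp w m, drp_lt hn hw hw2 m.isLt⟩).isLt⟩ := by
    intro m h3 hne
    exact Fin.ext (Psi_val_else hn hw hw2 g m h3 hne)
  refine ⟨?_, ⟨by omega, by omega, P1⟩, ?_, congrArg Fin.val P0⟩
  · intro m
    by_cases h0 : (m:ℕ) = 0
    · have hm : m = ⟨0, by omega⟩ := Fin.ext h0
      have q1 : Psi n w hn hw hw2 g m = ⟨w, by omega⟩ :=
        (congrArg (Psi n w hn hw hw2 g) hm).trans P0
      constructor
      · exact (congrArg (Psi n w hn hw hw2 g) q1).trans (Pw.trans hm.symm)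
      · intro h
        have hvv : w = (m:ℕ) := congrArg Fin.val (q1.symm.trans h)
        omega
    · by_cases hww : (m:ℕ) = w
      · have hm : m = ⟨w, by omega⟩ := Fin.ext hww
        have q1 : Psi n w hn hw hw2 g m = ⟨0, by omega⟩ :=
          (congrArg (Psi n w hn hw hw2 g) hm).trans Pw
        constructor
        · exact (congrArg (Psi n w hn hw hw2 g) q1).trans (P0.trans hm.symm)
        · intro h
          have hvv : (0:ℕ) = (m:ℕ) := congrArg Fin.val (q1.symm.trans h)
          omega
      · by_cases h1 : (m:ℕ) = 1
        · have hm : m = ⟨1, by omega⟩ := Fin.ext h1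
          have q1 : Psi n w hn hw hw2 g m = ⟨2, by omega⟩ :=
            (congrArg (Psi n w hn hw hw2 g) hm).trans P1
          constructor
          · exact (congrArg (Psi n w hn hw hw2 g) q1).trans (P2.trans hm.symm)
          · intro h
            have hvv : (2:ℕ) = (m:ℕ) := congrArg Fin.val (q1.symm.trans h)
            omega
        · by_cases h2 : (m:ℕ) = 2
          · have hm : m = ⟨2, by omega⟩ := Fin.ext h2
            have q1 : Psi n w hn hw hw2 g m = ⟨1, by omega⟩ :=
              (congrArg (Psi n w hn hw hw2 g) hm).trans P2
            constructor
            · exact (congrArg (Psi n w hn hw hw2 g) q1).trans (P1.trans hm.symm)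
            · intro h
              have hvv : (1:ℕ) = (m:ℕ) := congrArg Fin.val (q1.symm.trans h)
              omega
          · have h3 : 3 ≤ (m:ℕ) := by omega
            have E := Pelse m h3 hww
            have hy3 : (3:ℕ) ≤ lft w ((g ⟨drp w m, drp_lt hn hw hw2 m.isLt⟩ : Fin (2*(n-2))) : ℕ) :=
              lft_ge
            have hyw : lft w ((g ⟨drp w m, drp_lt hn hw hw2 m.isLt⟩ : Fin (2*(n-2))) : ℕ) ≠ w :=
              lft_ne
            have E2 := Pelse ⟨lft w ((g ⟨drp w m, drp_lt hn hw hw2 m.isLt⟩ : Fin (2*(n-2))) : ℕ),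
              lft_lt hn hw2 (g ⟨drp w m, drp_lt hn hw hw2 m.isLt⟩).isLt⟩ hy3 hyw
            have harg : (⟨drp w ((⟨lft w ((g ⟨drp w m, drp_lt hn hw hw2 m.isLt⟩ : Fin (2*(n-2))) : ℕ),
                lft_lt hn hw2 (g ⟨drp w m, drp_lt hn hw hw2 m.isLt⟩).isLt⟩ : Fin (2*n)) : ℕ),
                drp_lt hn hw hw2 (⟨lft w ((g ⟨drp w m, drp_lt hn hw hw2 m.isLt⟩ : Fin (2*(n-2))) : ℕ),
                lft_lt hn hw2 (g ⟨drp w m, drp_lt hn hw hw2 m.isLt⟩).isLt⟩ : Fin (2*n)).isLt⟩ :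
                Fin (2*(n-2))) = g ⟨drp w m, drp_lt hn hw hw2 m.isLt⟩ := by
              apply Fin.ext
              show drp w (lft w ((g ⟨drp w m, drp_lt hn hw hw2 m.isLt⟩ : Fin (2*(n-2))) : ℕ)) = _
              exact drp_lft
            have hggk : (g ⟨drp w ((⟨lft w ((g ⟨drp w m, drp_lt hn hw hw2 m.isLt⟩ : Fin (2*(n-2))) : ℕ),
                lft_lt hn hw2 (g ⟨drp w m, drp_lt hn hw hw2 m.isLt⟩).isLt⟩ : Fin (2*n)) : ℕ),
                drp_lt hn hw hw2 (⟨lft w ((g ⟨drp w m, drp_lt hn hw hw2 m.isLt⟩ : Fin (2*(n-2))) : ℕ),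
                lft_lt hn hw2 (g ⟨drp w m, drp_lt hn hw hw2 m.isLt⟩).isLt⟩ : Fin (2*n)).isLt⟩ :
                Fin (2*(n-2))) = ⟨drp w m, drp_lt hn hw hw2 m.isLt⟩ :=
              (congrArg g harg).trans (hg ⟨drp w m, drp_lt hn hw hw2 m.isLt⟩).1
            constructor
            · apply Fin.ext
              refine (congrArg Fin.val ((congrArg (Psi n w hn hw hw2 g) E).trans E2)).trans ?_
              refine (congrArg (fun z : Fin (2*(n-2)) => lft w (z : ℕ)) hggk).trans ?_
              exact lft_drp hw h3 hww
            · intro h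
              have hv : lft w ((g ⟨drp w m, drp_lt hn hw hw2 m.isLt⟩ : Fin (2*(n-2))) : ℕ) = (m:ℕ) :=
                congrArg Fin.val (E.symm.trans h)
              have hv2 : ((g ⟨drp w m, drp_lt hn hw hw2 m.isLt⟩ : Fin (2*(n-2))) : ℕ) = drp w (m:ℕ) :=
                (drp_lft (w := w)).symm.trans (congrArg (drp w) hv)
              exact (hg _).2 (Fin.ext hv2)
  · intro i h4 hle hS
    obtain ⟨hi1, hi2, he⟩ := hS
    by_cases hiw : i - 1 = w
    · have hm : (⟨i-1, by omega⟩ : Fin (2*n)) = ⟨w, by omega⟩ := Fin.ext hiw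
      have hvv : (0:ℕ) = i :=
        congrArg Fin.val (Pw.symm.trans ((congrArg (Psi n w hn hw hw2 g) hm).symm.trans he))
      omega
    · have hbound : i - 1 < 2*n := by omega
      have E := Pelse ⟨i-1, hbound⟩ (show (3:ℕ) ≤ i - 1 by omega) hiw
      have hv : lft w ((g ⟨drp w (i-1), drp_lt hn hw hw2 hbound⟩ : Fin (2*(n-2))) : ℕ) = i :=
        congrArg Fin.val (E.symm.trans he)
      by_cases hiw2 : i = w
      · exact lft_ne (hv.trans hiw2)
      · have hgk : ((g ⟨drp w (i-1), drp_lt hn hw hw2 hbound⟩ : Fin (2*(n-2))) : ℕ) = drp w i :=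
          (drp_lft (w := w)).symm.trans (congrArg (drp w) hv)
        have hd1 : 1 ≤ drp w i := by unfold drp; split_ifs <;> omega
        have hd2 : drp w i < 2*(n-2) := by unfold drp; split_ifs <;> omega
        have hidx : (⟨drp w i - 1, by omega⟩ : Fin (2*(n-2)))
            = ⟨drp w (i-1), drp_lt hn hw hw2 hbound⟩ := by
          apply Fin.ext
          show drp w i - 1 = drp w (i-1)
          unfold drp; split_ifs <;> omega
        have hshort : IsShort (n-2) g (drp w i) := by
          refine ⟨hd1, hd2, Fin.ext ?_⟩
          exact (congrArg (fun z => ((g z : Fin (2*(n-2))) : ℕ)) hidx).trans hgk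
        have hfin := hgs (drp w i) hshort
        unfold drp at hfin
        split_ifs at hfin <;> omega
lemma PsiPhi {n w : ℕ} (hn : 3 ≤ n) (hw : 3 ≤ w) (hw2 : w ≤ 2*n-1)
    (f : Fin (2*n) → Fin (2*n)) (hf : IsLCD n f)
    (e0 : f ⟨0, by omega⟩ = ⟨w, by omega⟩) (e1 : f ⟨1, by omega⟩ = ⟨2, by omega⟩) :
    Psi n w hn hw hw2 (Phi n w hn hw hw2 f) = f := by
  have e2 : f ⟨2, by omega⟩ = ⟨1, by omega⟩ := (lcd_eq_iff hf).mp e1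
  have ew : f ⟨w, by omega⟩ = ⟨0, by omega⟩ := (lcd_eq_iff hf).mp e0
  funext m
  by_cases h0 : (m:ℕ) = 0
  · have hm : m = ⟨0, by omega⟩ := Fin.ext h0
    have q1 : Psi n w hn hw hw2 (Phi n w hn hw hw2 f) m = ⟨w, by omega⟩ :=
      (congrArg _ hm).trans (Fin.ext ((Psi_val hn hw hw2 _ ⟨0, by omega⟩).trans (by simp)))
    exact q1.trans ((congrArg f hm).trans e0).symm
  · by_cases hww : (m:ℕ) = w
    · have hm : m = ⟨w, by omega⟩ := Fin.ext hww
      have q1 : Psi n w hn hw hw2 (Phi n w hn hw hw2 f) m = ⟨0, by omega⟩ :=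
        (congrArg _ hm).trans (Fin.ext ((Psi_val hn hw hw2 _ ⟨w, by omega⟩).trans
          (by simp [show w ≠ 0 by omega])))
      exact q1.trans ((congrArg f hm).trans ew).symm
    · by_cases h1 : (m:ℕ) = 1
      · have hm : m = ⟨1, by omega⟩ := Fin.ext h1
        have q1 : Psi n w hn hw hw2 (Phi n w hn hw hw2 f) m = ⟨2, by omega⟩ :=
          (congrArg _ hm).trans (Fin.ext ((Psi_val hn hw hw2 _ ⟨1, by omega⟩).trans
            (by simp [show (1:ℕ) ≠ w by omega])))
        exact q1.trans ((congrArg f hm).trans e1).symm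
      · by_cases h2 : (m:ℕ) = 2
        · have hm : m = ⟨2, by omega⟩ := Fin.ext h2
          have q1 : Psi n w hn hw hw2 (Phi n w hn hw hw2 f) m = ⟨1, by omega⟩ :=
            (congrArg _ hm).trans (Fin.ext ((Psi_val hn hw hw2 _ ⟨2, by omega⟩).trans
              (by simp [show (2:ℕ) ≠ w by omega])))
          exact q1.trans ((congrArg f hm).trans e2).symm
        · have h3 : 3 ≤ (m:ℕ) := by omega
          have hr := range_fact hn hw2 hf e0 e1 m h3 hww
          apply Fin.ext
          refine (Psi_val_else hn hw hw2 (Phi n w hn hw hw2 f) m h3 hww).trans ?_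
          have hxk : (⟨lft w ((⟨drp w (m:ℕ), drp_lt hn hw hw2 m.isLt⟩ : Fin (2*(n-2))) : ℕ),
              lft_lt hn hw2 (⟨drp w (m:ℕ), drp_lt hn hw hw2 m.isLt⟩ : Fin (2*(n-2))).isLt⟩ :
              Fin (2*n)) = m := Fin.ext (lft_drp hw h3 hww)
          refine (congrArg (lft w) (congrArg (fun x : Fin (2*n) => drp w ((f x : Fin (2*n)) : ℕ)) hxk)).trans ?_
          exact lft_drp hw hr.1 hr.2

lemma PhiPsi {n w : ℕ} (hn : 3 ≤ n) (hw : 3 ≤ w) (hw2 : w ≤ 2*n-1)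
    (g : Fin (2*(n-2)) → Fin (2*(n-2))) :
    Phi n w hn hw hw2 (Psi n w hn hw hw2 g) = g := by
  funext k
  apply Fin.ext
  show drp w ((Psi n w hn hw hw2 g ⟨lft w (k:ℕ), lft_lt hn hw2 k.isLt⟩ : Fin (2*n)) : ℕ) = ((g k : Fin (2*(n-2))) : ℕ)
  refine (congrArg (drp w) (Psi_val_else hn hw hw2 g ⟨lft w (k:ℕ), lft_lt hn hw2 k.isLt⟩ lft_ge lft_ne)).trans ?_
  refine (drp_lft (w := w)).trans ?_
  have hkk : (⟨drp w ((⟨lft w (k:ℕ), lft_lt hn hw2 k.isLt⟩ : Fin (2*n)) : ℕ),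
      drp_lt hn hw hw2 (⟨lft w (k:ℕ), lft_lt hn hw2 k.isLt⟩ : Fin (2*n)).isLt⟩ : Fin (2*(n-2))) = k :=
    Fin.ext (drp_lft (w := w))
  exact congrArg (fun z => ((g z : Fin (2*(n-2))) : ℕ)) hkk

open scoped Classical in
lemma cardS_eq {n w : ℕ} (hn : 3 ≤ n) (hw : 3 ≤ w) (hw2 : w ≤ 2*n-1) :
    ((univ.filter (fun f : Fin (2*n) → Fin (2*n) =>
        (IsLCD n f ∧ IsShort n f 2 ∧ ∀ i, 4 ≤ i → i + 1 ≤ 2*n → ¬ IsShort n f i) ∧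
        ((f ⟨0, by omega⟩ : Fin (2*n)) : ℕ) = w)).card)
      = ((univ.filter (fun g : Fin (2*(n-2)) → Fin (2*(n-2)) =>
        IsLCD (n-2) g ∧ ∀ i, IsShort (n-2) g i → i + 3 = w)).card) := by
  refine Finset.card_bij' (fun f _ => Phi n w hn hw hw2 f) (fun g _ => Psi n w hn hw hw2 g)
    ?_ ?_ ?_ ?_
  · intro f hfm
    simp only [mem_filter, mem_univ, true_and] at hfm ⊢
    obtain ⟨⟨hf, hs2, hns⟩, h0⟩ := hfm
    obtain ⟨h21, h22, he2⟩ := hs2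
    have e1 : f ⟨1, by omega⟩ = ⟨2, by omega⟩ := he2
    have e0 : f ⟨0, by omega⟩ = ⟨w, by omega⟩ := Fin.ext h0
    exact Phi_mem hn hw hw2 f hf e0 e1 hns
  · intro g hgm
    simp only [mem_filter, mem_univ, true_and] at hgm ⊢
    obtain ⟨hg, hgs⟩ := hgm
    obtain ⟨h1, h2, h3, h4⟩ := Psi_mem hn hw hw2 g hg hgs
    exact ⟨⟨h1, h2, h3⟩, h4⟩
  · intro f hfm
    simp only [mem_filter, mem_univ, true_and] at hfm
    obtain ⟨⟨hf, hs2, hns⟩, h0⟩ := hfm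
    obtain ⟨h21, h22, he2⟩ := hs2
    have e1 : f ⟨1, by omega⟩ = ⟨2, by omega⟩ := he2
    have e0 : f ⟨0, by omega⟩ = ⟨w, by omega⟩ := Fin.ext h0
    exact PsiPhi hn hw hw2 f hf e0 e1
  · intro g hgm
    exact PhiPsi hn hw hw2 g

open scoped Classical in
lemma cardU_eq {n w : ℕ} :
    (univ.filter (fun g : Fin (2*(n-2)) → Fin (2*(n-2)) =>
      IsLCD (n-2) g ∧ ∀ i, IsShort (n-2) g i → i + 3 = w)).card
    = d (n-2) 0 + (univ.filter (fun g : Fin (2*(n-2)) → Fin (2*(n-2)) =>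
      IsLCD (n-2) g ∧ (∃ j, IsShort (n-2) g j) ∧ ∀ i, IsShort (n-2) g i → i + 3 = w)).card := by
  have hset : (univ.filter (fun g : Fin (2*(n-2)) → Fin (2*(n-2)) =>
      IsLCD (n-2) g ∧ ∀ i, IsShort (n-2) g i → i + 3 = w))
      = (univ.filter (fun g : Fin (2*(n-2)) → Fin (2*(n-2)) =>
          IsLCD (n-2) g ∧ ∀ i, ¬ IsShort (n-2) g i))
        ∪ (univ.filter (fun g : Fin (2*(n-2)) → Fin (2*(n-2)) =>
          IsLCD (n-2) g ∧ (∃ j, IsShort (n-2) g j) ∧ ∀ i, IsShort (n-2) g i → i + 3 = w)) := by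
    ext g
    simp only [mem_filter, mem_union, mem_univ, true_and]
    constructor
    · rintro ⟨hg, hs⟩
      by_cases hex : ∃ j, IsShort (n-2) g j
      · exact Or.inr ⟨hg, hex, hs⟩
      · exact Or.inl ⟨hg, fun i hi => hex ⟨i, hi⟩⟩
    · rintro (⟨hg, hnone⟩ | ⟨hg, _, hs⟩)
      · exact ⟨hg, fun i hi => absurd hi (hnone i)⟩
      · exact ⟨hg, hs⟩
  rw [hset, card_union_of_disjoint]
  · congr 1
    · unfold d
      apply congrArg
      apply filter_congr
      intro g _
      constructor
      · rintro ⟨hg, hnone⟩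
        refine ⟨hg, ?_⟩
        rw [Finset.card_eq_zero, Finset.filter_eq_empty_iff]
        exact fun i _ => hnone i
      · rintro ⟨hg, hzero⟩
        refine ⟨hg, fun i hi => ?_⟩
        rw [Finset.card_eq_zero, Finset.filter_eq_empty_iff] at hzero
        have hb := isShort_bounds hi
        exact hzero (Finset.mem_Icc.mpr (by omega)) hi
  · rw [Finset.disjoint_left]
    intro g hg1 hg2
    simp only [mem_filter, mem_univ, true_and] at hg1 hg2
    obtain ⟨j, hj⟩ := hg2.2.1
    exact hg1.2 j hj

open scoped Classical in
lemma d1_eq {n : ℕ} (hn : 3 ≤ n) :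
    d (n-2) 1 = ∑ w ∈ Finset.Icc 3 (2*n-1),
      (univ.filter (fun g : Fin (2*(n-2)) → Fin (2*(n-2)) =>
        IsLCD (n-2) g ∧ (∃ j, IsShort (n-2) g j) ∧ ∀ i, IsShort (n-2) g i → i + 3 = w)).card := by
  unfold d
  rw [Finset.card_eq_sum_card_fiberwise
    (f := fun g : Fin (2*(n-2)) → Fin (2*(n-2)) =>
      3 + ((Finset.Icc 1 (2*(n-2)-1)).filter (fun i => IsShort (n-2) g i)).sum id)
    (t := Finset.Icc 3 (2*n-1)) ?_]
  · apply Finset.sum_congr rfl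
    intro w hw
    apply congrArg
    ext g
    simp only [mem_filter, mem_univ, true_and]
    constructor
    · rintro ⟨⟨hg, hcard⟩, hkey⟩
      obtain ⟨j, hj⟩ := Finset.card_eq_one.mp hcard
      have hjmem : j ∈ (Finset.Icc 1 (2*(n-2)-1)).filter (fun i => IsShort (n-2) g i) := by
        rw [hj]; exact Finset.mem_singleton_self j
      rw [hj, Finset.sum_singleton] at hkey
      simp only [mem_filter, Finset.mem_Icc] at hjmem
      refine ⟨hg, ⟨j, hjmem.2⟩, fun i hi => ?_⟩
      have hb := isShort_bounds hi
      have : i ∈ (Finset.Icc 1 (2*(n-2)-1)).filter (fun i => IsShort (n-2) g i) := by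
        simp only [mem_filter, Finset.mem_Icc]
        exact ⟨⟨by omega, by omega⟩, hi⟩
      rw [hj, Finset.mem_singleton] at this
      subst this
      simp only [id] at hkey
      omega
    · rintro ⟨hg, ⟨j, hj⟩, hs⟩
      have hb := isShort_bounds hj
      have hjw := hs j hj
      have hfil : (Finset.Icc 1 (2*(n-2)-1)).filter (fun i => IsShort (n-2) g i) = {j} := by
        ext i
        simp only [mem_filter, Finset.mem_Icc, Finset.mem_singleton]
        constructor
        · rintro ⟨-, hi⟩
          have := hs i hi
          omega
        · rintro rfl
          exact ⟨⟨by omega, by omega⟩, hj⟩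
      refine ⟨⟨hg, by rw [hfil]; rfl⟩, ?_⟩
      rw [hfil, Finset.sum_singleton]
      simp only [id]
      omega
  · intro g hg
    simp only [Finset.mem_coe, mem_filter, mem_univ, true_and] at hg
    obtain ⟨j, hj⟩ := Finset.card_eq_one.mp hg.2
    have hjmem : j ∈ (Finset.Icc 1 (2*(n-2)-1)).filter (fun i => IsShort (n-2) g i) := by
      rw [hj]; exact Finset.mem_singleton_self j
    simp only [mem_filter, Finset.mem_Icc] at hjmem
    show 3 + ((Finset.Icc 1 (2*(n-2)-1)).filter (fun i => IsShort (n-2) g i)).sum id ∈ Finset.Icc 3 (2*n-1)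
    rw [hj, Finset.sum_singleton]
    simp only [id]
    rw [Finset.mem_Icc]
    omega

open scoped Classical in
lemma stepB {n : ℕ} (hn : 3 ≤ n) :
    (univ.filter (fun f : Fin (2*n) → Fin (2*n) =>
      IsLCD n f ∧ IsShort n f 2 ∧ ∀ i, 4 ≤ i → i + 1 ≤ 2*n → ¬ IsShort n f i)).card
    = (2*n-3) * d (n-2) 0 + d (n-2) 1 := by
  rw [Finset.card_eq_sum_card_fiberwise
    (f := fun f : Fin (2*n) → Fin (2*n) => ((f ⟨0, by omega⟩ : Fin (2*n)) : ℕ))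
    (t := Finset.Icc 3 (2*n-1)) ?_]
  · have hterm : ∀ w ∈ Finset.Icc 3 (2*n-1),
        ((univ.filter (fun f : Fin (2*n) → Fin (2*n) =>
          IsLCD n f ∧ IsShort n f 2 ∧ ∀ i, 4 ≤ i → i + 1 ≤ 2*n → ¬ IsShort n f i)).filter
            (fun f => ((f ⟨0, by omega⟩ : Fin (2*n)) : ℕ) = w)).card
        = d (n-2) 0 + (univ.filter (fun g : Fin (2*(n-2)) → Fin (2*(n-2)) =>
            IsLCD (n-2) g ∧ (∃ j, IsShort (n-2) g j) ∧ ∀ i, IsShort (n-2) g i → i + 3 = w)).card := by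
      intro w hw
      rw [Finset.mem_Icc] at hw
      rw [Finset.filter_filter]
      rw [cardS_eq hn hw.1 hw.2]
      exact cardU_eq
    rw [Finset.sum_congr rfl hterm, Finset.sum_add_distrib, Finset.sum_const, Nat.card_Icc,
      smul_eq_mul, ← d1_eq hn]
    have : 2*n-1+1-3 = 2*n-3 := by omega
    rw [this]
  · intro f hf
    show ((f ⟨0, by omega⟩ : Fin (2*n)) : ℕ) ∈ Finset.Icc 3 (2*n-1)
    simp only [Finset.mem_coe, mem_filter, mem_univ, true_and] at hf
    obtain ⟨hlcd, hs2, hns⟩ := hf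
    obtain ⟨h1, h2, he⟩ := hs2
    have e1 : f ⟨1, by omega⟩ = ⟨2, by omega⟩ := he
    rw [Finset.mem_Icc]
    have hlt := (f ⟨0, by omega⟩).isLt
    have hne0 : ((f ⟨0, by omega⟩ : Fin (2*n)) : ℕ) ≠ 0 := by
      intro h
      exact (hlcd ⟨0, by omega⟩).2 (Fin.ext h)
    have hne1 : ((f ⟨0, by omega⟩ : Fin (2*n)) : ℕ) ≠ 1 := by
      intro h
      have : f ⟨0, by omega⟩ = ⟨1, by omega⟩ := Fin.ext h
      have h2 := (lcd_eq_iff hlcd).mp this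
      have : (2:ℕ) = 0 := congrArg Fin.val (e1.symm.trans h2)
      omega
    have hne2 : ((f ⟨0, by omega⟩ : Fin (2*n)) : ℕ) ≠ 2 := by
      intro h
      have : f ⟨0, by omega⟩ = ⟨2, by omega⟩ := Fin.ext h
      have h2' := (lcd_eq_iff hlcd).mp this
      have h3' := (lcd_eq_iff hlcd).mp e1
      have : (1:ℕ) = 0 := congrArg Fin.val (h3'.symm.trans h2')
      omega
    omega
def rr {n : ℕ} (hn : 3 ≤ n) (i : Fin (2*n)) : Fin (2*n) := ⟨2*n-1-(i:ℕ), by omega⟩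

def revF {n : ℕ} (hn : 3 ≤ n) (f : Fin (2*n) → Fin (2*n)) : Fin (2*n) → Fin (2*n) :=
  fun i => rr hn (f (rr hn i))

lemma rr_rr {n : ℕ} (hn : 3 ≤ n) (i : Fin (2*n)) : rr hn (rr hn i) = i := by
  apply Fin.ext
  show 2*n-1-(2*n-1-(i:ℕ)) = (i:ℕ)
  have := i.isLt
  omega

lemma revF_revF {n : ℕ} (hn : 3 ≤ n) (f : Fin (2*n) → Fin (2*n)) :
    revF hn (revF hn f) = f := by
  funext i
  show rr hn (rr hn (f (rr hn (rr hn i)))) = f i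
  exact (congrArg (fun z => rr hn (rr hn (f z))) (rr_rr hn i)).trans (rr_rr hn (f i))

lemma revF_lcd {n : ℕ} (hn : 3 ≤ n) {f : Fin (2*n) → Fin (2*n)} (hf : IsLCD n f) :
    IsLCD n (revF hn f) := by
  intro i
  constructor
  · show rr hn (f (rr hn (rr hn (f (rr hn i))))) = i
    refine (congrArg (fun z => rr hn (f z)) (rr_rr hn (f (rr hn i)))).trans ?_
    exact (congrArg (rr hn) ((hf (rr hn i)).1)).trans (rr_rr hn i)
  · intro h
    exact (hf (rr hn i)).2 ((rr_rr hn (f (rr hn i))).symm.trans (congrArg (rr hn) h))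

lemma revF_short {n : ℕ} (hn : 3 ≤ n) {f : Fin (2*n) → Fin (2*n)} (hf : IsLCD n f)
    {j : ℕ} (hj1 : 1 ≤ j) (hj2 : j ≤ 2*n-1) :
    IsShort n (revF hn f) j ↔ IsShort n f (2*n-j) := by
  rw [isShort_iff hj1 (by omega), isShort_iff (show 1 ≤ 2*n-j by omega) (show 2*n-j < 2*n by omega)]
  have hmk : rr hn ⟨j-1, by omega⟩ = ⟨2*n-j, by omega⟩ := Fin.ext (by show 2*n-1-(j-1) = 2*n-j; omega)
  have hmk2 : (⟨2*n-j-1, by omega⟩ : Fin (2*n)) = ⟨2*n-1-j, by omega⟩ := Fin.ext (by show 2*n-j-1 = 2*n-1-j; omega)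
  constructor
  · intro h
    have h2 : 2*n-1-(((f ⟨2*n-j, by omega⟩ : Fin (2*n))) : ℕ) = j :=
      (congrArg (fun z => 2*n-1-((f z : Fin (2*n)) : ℕ)) hmk).symm.trans h
    have hval : ((f ⟨2*n-j, by omega⟩ : Fin (2*n)) : ℕ) = 2*n-1-j := by
      have := (f ⟨2*n-j, by omega⟩).isLt
      omega
    have hfin : f ⟨2*n-1-j, by omega⟩ = ⟨2*n-j, by omega⟩ :=
      (lcd_eq_iff hf).mp (Fin.ext hval)
    exact (congrArg (fun z => ((f z : Fin (2*n)) : ℕ)) hmk2).trans (congrArg Fin.val hfin)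
  · intro h
    have hfin : f ⟨2*n-j, by omega⟩ = ⟨2*n-j-1, by omega⟩ :=
      (lcd_eq_iff hf).mp (Fin.ext h)
    show 2*n-1-((f (rr hn ⟨j-1, by omega⟩) : Fin (2*n)) : ℕ) = j
    refine (congrArg (fun z => 2*n-1-((f z : Fin (2*n)) : ℕ)) hmk).trans ?_
    rw [congrArg Fin.val hfin]
    show 2*n-1-(2*n-j-1) = j
    omega

open scoped Classical in
lemma cardA1_eq_A2 {n : ℕ} (hn : 3 ≤ n) :
    (univ.filter (fun f : Fin (2*n) → Fin (2*n) =>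
      IsLCD n f ∧ IsShort n f (2*n-2) ∧ ∀ i, 1 ≤ i → i + 1 ≤ 2*n-3 → ¬ IsShort n f i)).card
    = (univ.filter (fun f : Fin (2*n) → Fin (2*n) =>
      IsLCD n f ∧ IsShort n f 2 ∧ ∀ i, 4 ≤ i → i + 1 ≤ 2*n → ¬ IsShort n f i)).card := by
  refine Finset.card_bij' (fun f _ => revF hn f) (fun f _ => revF hn f) ?_ ?_ ?_ ?_
  · intro f hf
    simp only [mem_filter, mem_univ, true_and] at hf ⊢
    obtain ⟨hlcd, hsh, hns⟩ := hf
    refine ⟨revF_lcd hn hlcd, ?_, ?_⟩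
    · rw [revF_short hn hlcd (by omega) (by omega)]
      have : 2*n-2 = 2*n-2 := rfl
      have h22 : 2*n-(2:ℕ) = 2*n-2 := rfl
      exact (show 2*n-2 = 2*n-2 from rfl) ▸ hsh
    · intro i h4 hle hs
      rw [revF_short hn hlcd (by omega) (by omega)] at hs
      exact hns (2*n-i) (by omega) (by omega) hs
  · intro f hf
    simp only [mem_filter, mem_univ, true_and] at hf ⊢
    obtain ⟨hlcd, hsh, hns⟩ := hf
    refine ⟨revF_lcd hn hlcd, ?_, ?_⟩
    · rw [revF_short hn hlcd (by omega) (by omega)]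
      have h2 : 2*n-(2*n-2) = 2 := by omega
      rw [h2]
      exact hsh
    · intro i h1 hle hs
      rw [revF_short hn hlcd (by omega) (by omega)] at hs
      exact hns (2*n-i) (by omega) (by omega) hs
  · intro f _
    exact revF_revF hn f
  · intro f _
    exact revF_revF hn f


open scoped Classical in
lemma stepA {n : ℕ} (hn : 3 ≤ n) :
    B n (2*n-3)
    = (univ.filter (fun f : Fin (2*n) → Fin (2*n) =>
        IsLCD n f ∧ IsShort n f (2*n-2) ∧ ∀ i, 1 ≤ i → i + 1 ≤ 2*n-3 → ¬ IsShort n f i)).card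
    + (univ.filter (fun f : Fin (2*n) → Fin (2*n) =>
        IsLCD n f ∧ IsShort n f 2 ∧ ∀ i, 4 ≤ i → i + 1 ≤ 2*n → ¬ IsShort n f i)).card := by
  unfold B
  have hset : ((univ ×ˢ (Finset.Icc 1 (2*n) ×ˢ Finset.Icc 1 (2*n))).filter
      (fun x : (Fin (2*n) → Fin (2*n)) × ℕ × ℕ =>
        IsLCD n x.1 ∧ IsBubble n x.1 x.2.1 x.2.2 ∧ x.2.2 - x.2.1 + 1 = 2*n-3))
      = ((univ.filter (fun f : Fin (2*n) → Fin (2*n) =>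
          IsLCD n f ∧ IsShort n f (2*n-2) ∧ ∀ i, 1 ≤ i → i + 1 ≤ 2*n-3 → ¬ IsShort n f i)).image
          (fun f => (f, (1, 2*n-3))))
        ∪ ((univ.filter (fun f : Fin (2*n) → Fin (2*n) =>
          IsLCD n f ∧ IsShort n f 2 ∧ ∀ i, 4 ≤ i → i + 1 ≤ 2*n → ¬ IsShort n f i)).image
          (fun f => (f, (4, 2*n)))) := by
    ext x
    obtain ⟨f, a, b⟩ := x
    simp only [mem_filter, mem_union, mem_image, Finset.mem_product, mem_univ, true_and,
      Finset.mem_Icc, Prod.mk.injEq]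
    constructor
    · rintro ⟨⟨⟨ha1, ha2⟩, hb1', hb2'⟩, hlcd, hbub, hsz⟩
      obtain ⟨hb1, hble, hb2n, hnos, hleft, hright⟩ := hbub
      have hb : b = a + (2*n - 4) := by omega
      rcases hleft with h1 | hsha
      · subst h1
        left
        refine ⟨f, ⟨hlcd, ?_, ?_⟩, rfl, rfl, by omega⟩
        · rcases hright with h | h
          · exfalso; omega
          · have hb2 : b + 1 = 2*n-2 := by omega
            exact hb2 ▸ h
        · intro i hi1 hi2
          exact hnos i hi1 (by omega)
      · have ha3 : 3 ≤ a := by have := (isShort_bounds hsha).1; omega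
        have ha : a = 4 := by
          rcases hright with h | h
          · omega
          · have := (isShort_bounds h).2
            omega
        subst ha
        right
        refine ⟨f, ⟨hlcd, hsha, ?_⟩, rfl, rfl, by omega⟩
        intro i hi1 hi2
        exact hnos i hi1 (by omega)
    · rintro (⟨g, ⟨hlcd, hsh, hns⟩, hg, hA, hB⟩ | ⟨g, ⟨hlcd, hsh, hns⟩, hg, hA, hB⟩)
      · subst hg; subst hA; subst hB
        refine ⟨⟨⟨by omega, by omega⟩, by omega, by omega⟩, hlcd,
          ⟨by omega, by omega, by omega, ?_, Or.inl rfl, Or.inr ?_⟩, by omega⟩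
        · intro i h1 h2
          exact hns i h1 (by omega)
        · have h : 2*n-3+1 = 2*n-2 := by omega
          rw [h]; exact hsh
      · subst hg; subst hA; subst hB
        refine ⟨⟨⟨by omega, by omega⟩, by omega, by omega⟩, hlcd,
          ⟨by omega, by omega, by omega, ?_, Or.inr hsh, Or.inl rfl⟩, by omega⟩
        intro i h1 h2
        exact hns i h1 (by omega)
  rw [hset]
  rw [Finset.card_union_of_disjoint, Finset.card_image_of_injective _ (fun x y h => congrArg Prod.fst h),
    Finset.card_image_of_injective _ (fun x y h => congrArg Prod.fst h)]
  rw [Finset.disjoint_left]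
  intro x hx1 hx2
  simp only [mem_image] at hx1 hx2
  obtain ⟨g, -, h1⟩ := hx1
  obtain ⟨g', -, h2⟩ := hx2
  have := congrArg (fun z : (Fin (2*n) → Fin (2*n)) × ℕ × ℕ => z.2.1) (h1.trans h2.symm)
  simp only at this
  omega

/-- For every `n ≥ 3`, `B_{n,2n-3} = 2·((2n-3)·d_{n-2,0} + d_{n-2,1})`. -/
theorem bubble_size_sub_three (n : ℕ) (hn : 3 ≤ n) :
    B n (2*n-3) = 2 * ((2*n-3) * d (n-2) 0 + d (n-2) 1) := by
  rw [stepA hn, cardA1_eq_A2 hn, stepB hn]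
  ring
end

section
/- For every integer n ≥ 1, the number of linear chord diagrams on 2n vertices with no short chords is given by the inclusion-exclusion formula d_{n,0} = ∑_{j=0}^{n} (-1)^j · (2n-2j-1)!! · ρ_j, where ρ_j is the number of j-edge matchings of the path graph on 2n vertices and (2m-1)!! = (2m)!/(2^m·m!). -/
open Finset

open scoped Classical Nat

lemma doubleFact_eq (m : ℕ) : doubleFact m = (2*m-1)‼ := by
  cases m with
  | zero => decide
  | succ k =>
    unfold doubleFact
    have h1 : 2*(k+1) = (2*k+1)+1 := by ring
    rw [h1, Nat.factorial_eq_mul_doubleFactorial, ← h1, ← Nat.doubleFactorial_two_mul,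
      Nat.mul_div_cancel_left _ (Nat.doubleFactorial_pos _)]
    congr 1

lemma doubleFact_succ (m : ℕ) : doubleFact (m+1) = (2*m+1) * doubleFact m := by
  rw [doubleFact_eq, doubleFact_eq]
  have h1 : 2*(m+1)-1 = 2*m+1 := by omega
  rw [h1, Nat.doubleFactorial_add_one]

lemma card_fpf_inv : ∀ (m : ℕ) {α : Type} [Fintype α] [DecidableEq α] (s : Finset α),
    s.card = 2*m →
    (univ.filter (fun f : α → α => (∀ x, f (f x) = x) ∧ (∀ x ∈ s, f x ≠ x) ∧
      (∀ x ∉ s, f x = x))).card = doubleFact m := by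
  intro m
  induction m with
  | zero =>
    intro α _ _ s hs
    have hs0 : s = ∅ := card_eq_zero.mp (by simpa using hs)
    subst hs0
    have h1 : (univ.filter (fun f : α → α => (∀ x, f (f x) = x) ∧ (∀ x ∈ (∅ : Finset α), f x ≠ x) ∧
        (∀ x ∉ (∅ : Finset α), f x = x))) = {fun x => x} := by
      ext f
      simp only [mem_filter, mem_univ, true_and, mem_singleton, notMem_empty]
      constructor
      · rintro ⟨-, -, h⟩
        funext x
        exact h x (by simp)
      · rintro rfl
        refine ⟨fun x => rfl, fun x hx => absurd hx (by simp), fun x _ => rfl⟩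
    rw [h1, card_singleton]
    decide
  | succ m ih =>
    intro α _ _ s hs
    obtain ⟨a, ha⟩ : s.Nonempty := card_pos.mp (by omega)
    rw [Finset.card_eq_sum_card_fiberwise (f := fun f => f a) (t := s.erase a)
      (fun f hf => by
        simp only [mem_coe, mem_filter, mem_univ, true_and] at hf
        obtain ⟨hinv, hfp, hfix⟩ := hf
        refine mem_erase.mpr ⟨hfp a ha, ?_⟩
        by_contra hfa
        have h1 : f (f a) = f a := hfix (f a) hfa
        rw [hinv] at h1
        exact hfp a ha h1.symm)]
    have key : ∀ b ∈ s.erase a,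
        ((univ.filter (fun f : α → α => (∀ x, f (f x) = x) ∧ (∀ x ∈ s, f x ≠ x) ∧
          (∀ x ∉ s, f x = x))).filter (fun f => f a = b)).card = doubleFact m := by
      intro b hb
      obtain ⟨hba, hbs⟩ := mem_erase.mp hb
      set s' : Finset α := (s.erase a).erase b with hs'
      have hs'card : s'.card = 2*m := by
        rw [hs', card_erase_of_mem hb, card_erase_of_mem ha, hs]; omega
      have ha' : a ∉ s' := by simp [hs']
      have hb' : b ∉ s' := by simp [hs']
      have hmem' : ∀ x, x ∈ s' ↔ (x ∈ s ∧ x ≠ a ∧ x ≠ b) := by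
        intro x; simp [hs', mem_erase]; tauto
      rw [← ih s' hs'card]
      apply Finset.card_bij'
        (i := fun f _ => fun x => if x = a then a else if x = b then b else f x)
        (j := fun g _ => fun x => if x = a then b else if x = b then a else g x)
      · -- hi : maps into target
        intro f hf
        simp only [mem_filter, mem_univ, true_and] at hf ⊢
        obtain ⟨⟨hinv, hfp, hfix⟩, hfa⟩ := hf
        have hfb : f b = a := by rw [← hfa, hinv]
        have hne : ∀ x, x ≠ a → x ≠ b → f x ≠ a ∧ f x ≠ b := by
          intro x hxa hxb
          constructor
          · intro h; exact hxb (by rw [← hfa, ← h, hinv])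
          · intro h; exact hxa (by rw [← hfb, ← h, hinv])
        refine ⟨?_, ?_, ?_⟩
        · intro x
          by_cases hx2 : x = a
          · simp [hx2]
          by_cases hx1 : x = b
          · simp [hx1, hba]
          · have h3 := hne x hx2 hx1
            simp [hx1, hx2, h3.1, h3.2, hinv x]
        · intro x hx
          rw [hmem'] at hx
          simp only [if_neg hx.2.1, if_neg hx.2.2]
          exact hfp x hx.1
        · intro x hx
          by_cases hx2 : x = a
          · simp [hx2]
          by_cases hx1 : x = b
          · simp [hx1, hba]
          · rw [hmem'] at hx
            push_neg at hx
            have hxs : x ∉ s := by tauto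
            simp [hx1, hx2, hfix x hxs]
      · -- hj : maps back into source
        intro g hg
        simp only [mem_filter, mem_univ, true_and] at hg ⊢
        obtain ⟨hinv, hfp, hfix⟩ := hg
        have hga : g a = a := hfix a ha'
        have hgb : g b = b := hfix b hb'
        have hne : ∀ x, x ≠ a → x ≠ b → g x ≠ a ∧ g x ≠ b := by
          intro x hxa hxb
          constructor
          · intro h; exact hxa (by rw [← hga, ← h, hinv])
          · intro h; exact hxb (by rw [← hgb, ← h, hinv])
        refine ⟨⟨?_, ?_, ?_⟩, by simp⟩
        · intro x
          by_cases hx2 : x = a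
          · simp [hx2, hba]
          by_cases hx1 : x = b
          · simp [hx1, hba, hba.symm]
          · have h3 := hne x hx2 hx1
            simp [hx1, hx2, h3.1, h3.2, hinv x]
        · intro x hx
          by_cases hx2 : x = a
          · simp [hx2, hba]
          by_cases hx1 : x = b
          · simp [hx1, hx2]; exact ⟨hba, fun h => hba (Eq.symm h)⟩
          · have hxs' : x ∈ s' := (hmem' x).mpr ⟨hx, hx2, hx1⟩
            simp [hx1, hx2, hfp x hxs']
        · intro x hx
          have hx2 : x ≠ a := fun h => hx (h ▸ ha)
          have hx1 : x ≠ b := fun h => hx (h ▸ hbs)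
          have hxs' : x ∉ s' := fun h => hx ((hmem' x).mp h).1
          simp [hx1, hx2, hfix x hxs']
      · -- left inverse
        intro f hf
        simp only [mem_filter, mem_univ, true_and] at hf
        obtain ⟨⟨hinv, hfp, hfix⟩, hfa⟩ := hf
        have hfb : f b = a := by rw [← hfa, hinv]
        funext x
        by_cases hx2 : x = a
        · simp [hx2, hfa]
        by_cases hx1 : x = b
        · simp [hx1, hx2, hfb]
        · simp [hx1, hx2]
      · -- right inverse
        intro g hg
        simp only [mem_filter, mem_univ, true_and] at hg
        obtain ⟨hinv, hfp, hfix⟩ := hg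
        funext x
        by_cases hx2 : x = a
        · simp [hx2]; exact (hfix a ha').symm
        by_cases hx1 : x = b
        · simp [hx1, hba]; exact (hfix b hb').symm
        · simp [hx1, hx2]
    rw [Finset.sum_congr rfl key, Finset.sum_const, card_erase_of_mem ha, hs, smul_eq_mul,
      doubleFact_succ]
    have h2 : 2*(m+1)-1 = 2*m+1 := by omega
    rw [h2]

lemma lemA (n : ℕ) (hn : 1 ≤ n) (S : Finset ℕ) (hS1 : S ⊆ Finset.Icc 1 (2*n-1))
    (hS2 : ∀ i ∈ S, i + 1 ∉ S) :
    (univ.filter (fun f : Fin (2*n) → Fin (2*n) =>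
      IsLCD n f ∧ ∀ i ∈ S, IsShort n f i)).card = doubleFact (n - S.card) := by
  classical
  set T : Finset (Fin (2*n)) := univ.filter (fun x => x.val + 1 ∈ S ∨ x.val ∈ S) with hT
  have hmemT : ∀ x : Fin (2*n), x ∈ T ↔ (x.val + 1 ∈ S ∨ x.val ∈ S) := by
    intro x; simp [hT]
  have cardT : T.card = 2 * S.card := by
    have hdis : Disjoint
        (S.attach.image (fun i => (⟨i.1 - 1, by have := mem_Icc.mp (hS1 i.2); omega⟩ : Fin (2*n))))
        (S.attach.image (fun i => (⟨i.1, by have := mem_Icc.mp (hS1 i.2); omega⟩ : Fin (2*n)))) := by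
      rw [Finset.disjoint_left]
      rintro x hx1 hx2
      rw [mem_image] at hx1 hx2
      obtain ⟨⟨i, hi⟩, -, h1⟩ := hx1
      obtain ⟨⟨i', hi'⟩, -, h2⟩ := hx2
      have hv1 : i - 1 = x.val := by simpa using congrArg Fin.val h1
      have hv2 : i' = x.val := by simpa using congrArg Fin.val h2
      have hi1 := mem_Icc.mp (hS1 hi)
      have hii : i' + 1 = i := by omega
      exact hS2 i' hi' (hii ▸ hi)
    have h1 : T = (S.attach.image (fun i => (⟨i.1 - 1, by have := mem_Icc.mp (hS1 i.2); omega⟩ : Fin (2*n))))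
        ∪ (S.attach.image (fun i => (⟨i.1, by have := mem_Icc.mp (hS1 i.2); omega⟩ : Fin (2*n)))) := by
      ext x
      rw [hmemT, mem_union, mem_image, mem_image]
      constructor
      · rintro (h | h)
        · exact Or.inl ⟨⟨x.val + 1, h⟩, mem_attach _ _, by ext; simp⟩
        · exact Or.inr ⟨⟨x.val, h⟩, mem_attach _ _, rfl⟩
      · rintro (⟨⟨i, hi⟩, -, rfl⟩ | ⟨⟨i, hi⟩, -, rfl⟩)
        · left
          have hi1 := mem_Icc.mp (hS1 hi)
          simpa [Nat.sub_add_cancel hi1.1] using hi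
        · right; exact hi
    rw [h1, card_union_of_disjoint hdis, card_image_of_injOn, card_image_of_injOn, card_attach]
    · omega
    · rintro ⟨i, hi⟩ - ⟨i', hi'⟩ - h
      have hv : i = i' := by simpa using congrArg Fin.val h
      exact Subtype.ext hv
    · intro x _ y _ h
      have hv : x.1 - 1 = y.1 - 1 := congrArg Fin.val h
      have h1 := mem_Icc.mp (hS1 x.2)
      have h2 := mem_Icc.mp (hS1 y.2)
      exact Subtype.ext (by omega)
  have hjn : 2 * S.card ≤ 2 * n := by
    calc 2 * S.card = T.card := cardT.symm
    _ ≤ Fintype.card (Fin (2*n)) := card_le_univ T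
    _ = 2*n := Fintype.card_fin _
  have hcompl : Tᶜ.card = 2 * (n - S.card) := by
    rw [card_compl, cardT, Fintype.card_fin]; omega
  rw [← card_fpf_inv (n - S.card) Tᶜ hcompl]
  set F : (Fin (2*n) → Fin (2*n)) → Fin (2*n) → Fin (2*n) := fun g x =>
    if h : x.val + 1 ∈ S then ⟨x.val + 1, by have := mem_Icc.mp (hS1 h); omega⟩
    else if h' : x.val ∈ S then ⟨x.val - 1, by omega⟩
    else g x with hF
  have hF1 : ∀ g (x : Fin (2*n)) (h : x.val + 1 ∈ S),
      F g x = ⟨x.val + 1, by have := mem_Icc.mp (hS1 h); omega⟩ := by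
    intro g x h
    simp only [hF]
    rw [dif_pos h]
  have hF2 : ∀ g (x : Fin (2*n)), x.val + 1 ∉ S → x.val ∈ S → F g x = ⟨x.val - 1, by omega⟩ := by
    intro g x h h'
    simp only [hF]
    rw [dif_neg h, dif_pos h']
  have hF3 : ∀ g (x : Fin (2*n)), x.val + 1 ∉ S → x.val ∉ S → F g x = g x := by
    intro g x h h'
    simp only [hF]
    rw [dif_neg h, dif_neg h']
  apply Finset.card_bij'
    (i := fun f _ => fun x => if x ∈ T then x else f x)
    (j := fun g _ => F g)
  case hi =>
    intro f hf
    simp only [mem_filter, mem_univ, true_and] at hf ⊢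
    obtain ⟨hlcd, hsh⟩ := hf
    have hshort : ∀ i ∈ S, ∀ (h1 : i - 1 < 2*n) (h2 : i < 2*n), f ⟨i-1, h1⟩ = ⟨i, h2⟩ := by
      intro i hi h1 h2
      have h6 : ∃ (_h1 : 1 ≤ i) (h2 : i < 2*n), f ⟨i-1, by omega⟩ = ⟨i, h2⟩ := hsh i hi
      obtain ⟨-, h2', he5⟩ := h6
      exact he5
    have hshort' : ∀ i ∈ S, ∀ (h1 : i - 1 < 2*n) (h2 : i < 2*n), f ⟨i, h2⟩ = ⟨i-1, h1⟩ := by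
      intro i hi h1 h2
      have := (hlcd ⟨i-1, h1⟩).1
      rw [hshort i hi h1 h2] at this
      exact this
    have hfT : ∀ x ∈ T, f x ∈ T := by
      intro x hx
      rw [hmemT] at hx
      rcases hx with h | h
      · have hb := mem_Icc.mp (hS1 h)
        have hfx : f x = ⟨x.val + 1, by omega⟩ := by
          have h5 := hshort (x.val+1) h (by omega) (by omega)
          have hx5 : (⟨x.val + 1 - 1, by omega⟩ : Fin (2*n)) = x := by ext; simp
          rw [hx5] at h5
          exact h5
        rw [hmemT, hfx]
        right; exact h
      · have hb := mem_Icc.mp (hS1 h)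
        have hfx : f x = ⟨x.val - 1, by omega⟩ := by
          have h5 := hshort' x.val h (by omega) (by omega)
          have hx5 : (⟨x.val, x.isLt⟩ : Fin (2*n)) = x := by ext; simp
          rw [hx5] at h5
          exact h5
        rw [hmemT, hfx]
        left
        simpa [Nat.sub_add_cancel hb.1] using h
    have hfT' : ∀ x, x ∉ T → f x ∉ T := by
      intro x hx hfx
      have h2 := hfT (f x) hfx
      rw [(hlcd x).1] at h2
      exact hx h2
    refine ⟨?_, ?_, ?_⟩
    · intro x
      by_cases hx : x ∈ T
      · simp [hx]
      · have h1 : f x ∉ T := hfT' x hx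
        simp [hx, h1, (hlcd x).1]
    · intro x hx
      rw [mem_compl] at hx
      simp only [if_neg hx]
      exact (hlcd x).2
    · intro x hx
      rw [mem_compl, not_not] at hx
      simp [hx]
  case hj =>
    intro g hg
    simp only [mem_filter, mem_univ, true_and] at hg ⊢
    obtain ⟨hinv, hfp, hfix⟩ := hg
    have hfixT : ∀ x ∈ T, g x = x := fun x hx => hfix x (by rwa [mem_compl, not_not])
    have hgT : ∀ x, x ∉ T → g x ∉ T := by
      intro x hx hgx
      have h5 := hfixT (g x) hgx
      rw [hinv] at h5
      exact hx (h5 ▸ hgx)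
    constructor
    · -- IsLCD
      intro x
      by_cases h1 : x.val + 1 ∈ S
      · have hb := mem_Icc.mp (hS1 h1)
        constructor
        · rw [hF1 g x h1]
          rw [hF2 g ⟨x.val + 1, by omega⟩ (by simpa using hS2 _ h1) (by simpa using h1)]
          ext
          simp
        · rw [hF1 g x h1]
          intro h
          have := congrArg Fin.val h
          simp at this
      · by_cases h2 : x.val ∈ S
        · have hb := mem_Icc.mp (hS1 h2)
          constructor
          · rw [hF2 g x h1 h2]
            rw [hF1 g ⟨x.val - 1, by omega⟩ (by simpa [Nat.sub_add_cancel hb.1] using h2)]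
            ext
            simp [Nat.sub_add_cancel hb.1]
          · rw [hF2 g x h1 h2]
            intro h
            have := congrArg Fin.val h
            simp at this
            omega
        · have hxT : x ∉ T := by rw [hmemT]; tauto
          have hgxT : g x ∉ T := hgT x hxT
          have hg1 : (g x).val + 1 ∉ S := by rw [hmemT] at hgxT; tauto
          have hg2 : (g x).val ∉ S := by rw [hmemT] at hgxT; tauto
          constructor
          · rw [hF3 g x h1 h2, hF3 g (g x) hg1 hg2]
            exact hinv x
          · rw [hF3 g x h1 h2]
            exact hfp x (by rwa [mem_compl])
    · -- all shorts
      intro i hi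
      have hb := mem_Icc.mp (hS1 hi)
      refine ⟨hb.1, by omega, ?_⟩
      rw [hF1 g ⟨i - 1, by omega⟩ (by simpa [Nat.sub_add_cancel hb.1] using hi)]
      ext
      simp [Nat.sub_add_cancel hb.1]
  case left_inv =>
    intro f hf
    simp only [mem_filter, mem_univ, true_and] at hf
    obtain ⟨hlcd, hsh⟩ := hf
    have hshort : ∀ i ∈ S, ∀ (h1 : i - 1 < 2*n) (h2 : i < 2*n), f ⟨i-1, h1⟩ = ⟨i, h2⟩ := by
      intro i hi h1 h2
      have h6 : ∃ (_h1 : 1 ≤ i) (h2 : i < 2*n), f ⟨i-1, by omega⟩ = ⟨i, h2⟩ := hsh i hi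
      obtain ⟨-, h2', he5⟩ := h6
      exact he5
    have hshort' : ∀ i ∈ S, ∀ (h1 : i - 1 < 2*n) (h2 : i < 2*n), f ⟨i, h2⟩ = ⟨i-1, h1⟩ := by
      intro i hi h1 h2
      have := (hlcd ⟨i-1, h1⟩).1
      rw [hshort i hi h1 h2] at this
      exact this
    funext x
    show F (fun y => if y ∈ T then y else f y) x = f x
    by_cases h1 : x.val + 1 ∈ S
    · have hb := mem_Icc.mp (hS1 h1)
      rw [hF1 (fun y => if y ∈ T then y else f y) x h1]
      have h5 := hshort (x.val+1) h1 (by omega) (by omega)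
      have hx : (⟨x.val + 1 - 1, by omega⟩ : Fin (2*n)) = x := by ext; simp
      rw [hx] at h5
      exact h5.symm
    · by_cases h2 : x.val ∈ S
      · have hb := mem_Icc.mp (hS1 h2)
        rw [hF2 (fun y => if y ∈ T then y else f y) x h1 h2]
        have h5 := hshort' x.val h2 (by omega) (by omega)
        have hx : (⟨x.val, x.isLt⟩ : Fin (2*n)) = x := by ext; simp
        rw [hx] at h5
        exact h5.symm
      · have hxT : x ∉ T := by rw [hmemT]; tauto
        rw [hF3 (fun y => if y ∈ T then y else f y) x h1 h2]
        exact if_neg hxT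
  case right_inv =>
    intro g hg
    simp only [mem_filter, mem_univ, true_and] at hg
    obtain ⟨hinv, hfp, hfix⟩ := hg
    funext x
    by_cases hx : x ∈ T
    · show (if x ∈ T then x else F g x) = g x
      rw [if_pos hx]
      exact (hfix x (by rwa [mem_compl, not_not])).symm
    · show (if x ∈ T then x else F g x) = g x
      rw [if_neg hx]
      have h1 : x.val + 1 ∉ S := by rw [hmemT] at hx; tauto
      have h2 : x.val ∉ S := by rw [hmemT] at hx; tauto
      exact hF3 g x h1 h2

lemma matching_card_le (n : ℕ) (S : Finset ℕ) (hS1 : S ⊆ Finset.Icc 1 (2*n-1))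
    (hS2 : ∀ i ∈ S, i + 1 ∉ S) : S.card ≤ n := by
  have h := Finset.card_le_card_of_injOn (f := fun i => (i+1)/2)
    (s := S) (t := Finset.Icc 1 n)
    (fun i hi => by
      have := mem_Icc.mp (hS1 hi)
      simp only [mem_coe, mem_Icc]
      omega)
    (fun i hi i' hi' h => by
      simp only at h
      have : i' = i + 1 ∨ i = i' + 1 ∨ i = i' := by omega
      rcases this with h5 | h5 | h5
      · exact absurd (h5 ▸ hi') (hS2 i hi)
      · exact absurd (h5 ▸ hi) (hS2 i' hi')
      · exact h5)
  simpa using h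

/-- Inclusion-exclusion: for every `n ≥ 1`, the number of linear chord diagrams on `2n`
vertices with no short chords is `∑_{j=0}^{n} (-1)^j (2n-2j-1)!! ρ_j`, where `ρ_j` is
the number of `j`-edge matchings of the path on `2n` vertices and
`(2(n-j)-1)!! = (2n-2j-1)!!` is the double factorial. -/
theorem no_short_chord_inclusion_exclusion (n : ℕ) (hn : 1 ≤ n) :
    (d n 0 : ℤ) = ∑ j ∈ Finset.range (n+1),
      (-1)^j * (doubleFact (n-j) : ℤ) * (pathMatch (2*n) j : ℤ) := by
  classical
  set P := (Finset.Icc 1 (2*n-1)).powerset with hP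
  set L := univ.filter (fun f : Fin (2*n) → Fin (2*n) => IsLCD n f) with hL
  set M := P.filter (fun S => ∀ i ∈ S, i + 1 ∉ S) with hM
  have step1 : (d n 0 : ℤ) = ∑ f ∈ L,
      (if (Finset.Icc 1 (2*n-1)).filter (fun i => IsShort n f i) = ∅ then (1:ℤ) else 0) := by
    rw [Finset.sum_boole]
    unfold d
    rw [hL, filter_filter]
    congr 2
    ext f
    simp only [mem_filter, Finset.card_eq_zero]
  have step2 : ∀ f : Fin (2*n) → Fin (2*n),
      (if (Finset.Icc 1 (2*n-1)).filter (fun i => IsShort n f i) = ∅ then (1:ℤ) else 0)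
        = ∑ s ∈ P, (if (∀ i ∈ s, IsShort n f i) then ((-1:ℤ))^s.card else 0) := by
    intro f
    have hpow : ((Finset.Icc 1 (2*n-1)).filter (fun i => IsShort n f i)).powerset
        = P.filter (fun s => ∀ i ∈ s, IsShort n f i) := by
      ext s
      rw [mem_powerset, mem_filter, hP, mem_powerset]
      constructor
      · intro hsub
        exact ⟨hsub.trans (filter_subset _ _), fun i hi => (mem_filter.mp (hsub hi)).2⟩
      · rintro ⟨h1, h2⟩ i hi
        exact mem_filter.mpr ⟨h1 hi, h2 i hi⟩
    calc (if (Finset.Icc 1 (2*n-1)).filter (fun i => IsShort n f i) = ∅ then (1:ℤ) else 0)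
        = ∑ t ∈ ((Finset.Icc 1 (2*n-1)).filter (fun i => IsShort n f i)).powerset,
            (-1:ℤ)^t.card := Finset.sum_powerset_neg_one_pow_card.symm
      _ = ∑ s ∈ P.filter (fun s => ∀ i ∈ s, IsShort n f i), (-1:ℤ)^s.card := by rw [hpow]
      _ = ∑ s ∈ P, (if (∀ i ∈ s, IsShort n f i) then ((-1:ℤ))^s.card else 0) :=
          Finset.sum_filter _ _
  have step3 : (d n 0 : ℤ) = ∑ s ∈ P, (-1:ℤ)^s.card *
      ((univ.filter (fun f : Fin (2*n) → Fin (2*n) =>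
        IsLCD n f ∧ ∀ i ∈ s, IsShort n f i)).card : ℤ) := by
    rw [step1]
    rw [Finset.sum_congr rfl (fun f _ => step2 f), Finset.sum_comm]
    refine Finset.sum_congr rfl (fun s _ => ?_)
    have h1 : ∀ f : Fin (2*n) → Fin (2*n),
        (if (∀ i ∈ s, IsShort n f i) then ((-1:ℤ))^s.card else 0)
          = (-1:ℤ)^s.card * (if (∀ i ∈ s, IsShort n f i) then (1:ℤ) else 0) := by
      intro f
      by_cases h : ∀ i ∈ s, IsShort n f i <;> simp [h]
    rw [Finset.sum_congr rfl (fun f _ => h1 f), ← Finset.mul_sum, Finset.sum_boole]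
    congr 2
    rw [hL, filter_filter]
  have hzero : ∀ s ∈ P, s ∉ M →
      (univ.filter (fun f : Fin (2*n) → Fin (2*n) =>
        IsLCD n f ∧ ∀ i ∈ s, IsShort n f i)) = ∅ := by
    intro s hsP hsM
    rw [hM, mem_filter] at hsM
    push_neg at hsM
    obtain ⟨i, hi, hi1⟩ := hsM hsP
    rw [Finset.eq_empty_iff_forall_notMem]
    intro f hf
    rw [mem_filter] at hf
    obtain ⟨-, hlcd, hsh⟩ := hf
    have h6 : ∃ (_h1 : 1 ≤ i) (h2 : i < 2*n), f ⟨i-1, by omega⟩ = ⟨i, h2⟩ := hsh i hi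
    obtain ⟨hb1, hb2, he1⟩ := h6
    have h7 : ∃ (_h1 : 1 ≤ i+1) (h2 : i+1 < 2*n), f ⟨i+1-1, by omega⟩ = ⟨i+1, h2⟩ := hsh (i+1) hi1
    obtain ⟨hb1', hb3, he2⟩ := h7
    have key : f ⟨i, hb2⟩ = ⟨i-1, by omega⟩ := by
      have := (hlcd ⟨i-1, by omega⟩).1
      rw [he1] at this
      exact this
    have key2 : (⟨i+1-1, by omega⟩ : Fin (2*n)) = ⟨i, hb2⟩ := by ext; simp
    rw [key2, key] at he2
    have hv : i - 1 = i + 1 := congrArg Fin.val he2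
    omega
  have step4 : (d n 0 : ℤ) = ∑ s ∈ M, (-1:ℤ)^s.card * ((doubleFact (n - s.card) : ℤ)) := by
    rw [step3]
    rw [← Finset.sum_subset (Finset.filter_subset _ P)
      (fun s hs hns => by rw [hzero s hs hns]; simp)]
    refine Finset.sum_congr rfl (fun s hs => ?_)
    rw [hM, mem_filter, hP, mem_powerset] at hs
    rw [lemA n hn s hs.1 hs.2]
  rw [step4]
  rw [← Finset.sum_fiberwise_of_maps_to (g := fun s => s.card) (t := Finset.range (n+1))
    (fun s hs => by
      rw [hM, mem_filter, hP, mem_powerset] at hs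
      simp only [Finset.mem_range]
      have := matching_card_le n s hs.1 hs.2
      omega)]
  refine Finset.sum_congr rfl (fun j hj => ?_)
  have hterm : ∀ s ∈ M.filter (fun s => s.card = j),
      (-1:ℤ)^s.card * ((doubleFact (n - s.card) : ℤ))
        = (-1:ℤ)^j * (doubleFact (n - j) : ℤ) := by
    intro s hs
    rw [mem_filter] at hs
    rw [hs.2]
  rw [Finset.sum_congr rfl hterm, Finset.sum_const, nsmul_eq_mul]
  have hpm : (M.filter (fun s => s.card = j)).card = pathMatch (2*n) j := by
    unfold pathMatch
    rw [hM, filter_filter]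
    congr 1
    apply Finset.filter_congr
    intro s _
    tauto
  rw [hpm]
  ring
end
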